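/- arXiv:1609.02654 — 2 statements merged into one kernel-verified Lean document; each statement's English description precedes it below -/
import Mathlib

section
/- If λ_max(BA − D) < 0, then λ_max(BA) < max_{1≤i≤N} δ_i. -/
open Matrix

/-- if every real eigenvalue of BA − D is negative, then every real
eigenvalue of BA is less than max_i δ_i (spectra of BA−D and BA are real). -/
theorem eig_BA_lt_max_delta (N : ℕ) (hN : 0 < N)
    (A : Matrix (Fin N) (Fin N) ℝ) (hAsymm : A.IsSymm)
    (hA01 : ∀ i j, A i j = 0 ∨ A i j = 1)
    (β δ : Fin N → ℝ) (hβ : ∀ i, 0 < β i) (hδ : ∀ i, 0 < δ i)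
    (hstab : ∀ μ : ℝ, (∃ v : Fin N → ℝ, v ≠ 0 ∧
      (Matrix.diagonal β * A - Matrix.diagonal δ).mulVec v = μ • v) → μ < 0) :
    ∀ μ : ℝ, (∃ v : Fin N → ℝ, v ≠ 0 ∧ (Matrix.diagonal β * A).mulVec v = μ • v) →
      μ < Finset.univ.sup' (Finset.univ_nonempty_iff.mpr ⟨⟨0, hN⟩⟩) δ := by
  intro μ ⟨v, hv, hμv⟩
  set s : Fin N → ℝ := fun i => Real.sqrt (β i) with hs
  have hspos : ∀ i, 0 < s i := fun i => Real.sqrt_pos.mpr (hβ i)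
  have hssq : ∀ i, s i * s i = β i := fun i => Real.mul_self_sqrt (hβ i).le
  have hdmul : ∀ (c u : Fin N → ℝ), (Matrix.diagonal c).mulVec u = fun j => c j * u j := by
    intro c u; funext j; simp [Matrix.mulVec_diagonal]
  -- the symmetrized matrix S = s A s − D
  set S : Matrix (Fin N) (Fin N) ℝ :=
    Matrix.diagonal s * A * Matrix.diagonal s - Matrix.diagonal δ with hSdef
  have hSmul : ∀ u : Fin N → ℝ, S.mulVec u =
      fun i => s i * (A.mulVec (fun j => s j * u j)) i - δ i * u i := by
    intro u
    have h1 : S.mulVec u =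
        (Matrix.diagonal s).mulVec (A.mulVec ((Matrix.diagonal s).mulVec u))
          - (Matrix.diagonal δ).mulVec u := by
      rw [hSdef, Matrix.sub_mulVec, Matrix.mulVec_mulVec, Matrix.mulVec_mulVec]
    rw [h1, hdmul s u]
    funext i
    rw [Pi.sub_apply, hdmul, hdmul]
  -- every eigenvalue (with eigenvector) of S is negative
  have hstabS : ∀ (ν : ℝ) (x : Fin N → ℝ), x ≠ 0 → S.mulVec x = ν • x → ν < 0 := by
    intro ν x hx hSx
    apply hstab
    refine ⟨fun i => s i * x i, ?_, ?_⟩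
    · intro h
      apply hx
      funext i
      have := congrFun h i
      simp only [Pi.zero_apply] at this ⊢
      rcases mul_eq_zero.mp this with h' | h'
      · exact absurd h' (hspos i).ne'
      · exact h'
    · have h1 : (Matrix.diagonal β * A - Matrix.diagonal δ).mulVec (fun i => s i * x i) =
          (Matrix.diagonal β).mulVec (A.mulVec (fun i => s i * x i))
            - (Matrix.diagonal δ).mulVec (fun i => s i * x i) := by
        rw [Matrix.sub_mulVec, Matrix.mulVec_mulVec]
      rw [h1, hdmul, hdmul]
      funext i
      have hxi : s i * (A.mulVec (fun j => s j * x j)) i - δ i * x i = ν * x i := by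
        have := congrFun hSx i
        rw [hSmul x] at this
        simpa using this
      have hxi' : s i * (A.mulVec (fun j => s j * x j)) i = ν * x i + δ i * x i := by
        linarith
      have key : β i * (A.mulVec (fun j => s j * x j)) i
          = s i * (ν * x i + δ i * x i) := by
        rw [← hxi', ← hssq i]; ring
      simp only [Pi.sub_apply, Pi.smul_apply, smul_eq_mul]
      rw [key]; ring
  -- S is symmetric / Hermitian
  have hSsymm : S.IsHermitian := by
    have hA' : Aᵀ = A := hAsymm
    simp only [Matrix.IsHermitian, hSdef, Matrix.conjTranspose_eq_transpose_of_trivial,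
      Matrix.transpose_sub, Matrix.transpose_mul, Matrix.diagonal_transpose, hA',
      Matrix.mul_assoc]
  -- -S is positive semidefinite
  have hM : (-S).PosSemidef := by
    have hMh : (-S).IsHermitian := hSsymm.neg
    apply hMh.posSemidef_iff_eigenvalues_nonneg.mpr
    intro i
    have hb := hMh.mulVec_eigenvectorBasis i
    have hbne : (⇑(hMh.eigenvectorBasis i) : Fin N → ℝ) ≠ 0 := by
      intro h
      exact hMh.eigenvectorBasis.orthonormal.ne_zero i (by ext j; exact congrFun h j)
    have hSb : S.mulVec ⇑(hMh.eigenvectorBasis i)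
        = (-hMh.eigenvalues i) • ⇑(hMh.eigenvectorBasis i) := by
      rw [Matrix.neg_mulVec] at hb
      funext j
      have := congrFun hb j
      simp only [Pi.neg_apply, Pi.smul_apply, smul_eq_mul] at this ⊢
      linarith
    have := hstabS _ _ hbne hSb
    rw [Pi.zero_apply]
    linarith
  -- now apply the quadratic form to x = v / s
  set x : Fin N → ℝ := fun i => v i / s i with hx
  have hxne : x ≠ 0 := by
    intro h
    apply hv
    funext i
    have := congrFun h i
    simp only [hx, Pi.zero_apply, div_eq_zero_iff] at this
    rcases this with h' | h'
    · exact h'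
    · exact absurd h' (hspos i).ne'
  have hdx : (fun j => s j * x j) = v := by
    funext j
    have := (hspos j).ne'
    simp only [hx]
    field_simp
  -- A *ᵥ v = μ • (v / β)
  have hAv : ∀ i, A.mulVec v i = μ * v i / β i := by
    intro i
    have h1 : (Matrix.diagonal β * A).mulVec v
        = (Matrix.diagonal β).mulVec (A.mulVec v) := by
      rw [Matrix.mulVec_mulVec]
    rw [h1, hdmul] at hμv
    have := congrFun hμv i
    simp only [Pi.smul_apply, smul_eq_mul] at this
    rw [eq_div_iff (hβ i).ne']
    linarith [this]
  -- S *ᵥ x = (fun i => (μ - δ i) * x i)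
  have hSx : S.mulVec x = fun i => (μ - δ i) * x i := by
    rw [hSmul, hdx]
    funext i
    rw [hAv i]
    have hsne := (hspos i).ne'
    have hβne := (hβ i).ne'
    simp only [hx]
    rw [← hssq i]
    field_simp
  -- the quadratic form value
  have hq : x ⬝ᵥ ((-S).mulVec x) = ∑ i, (δ i - μ) * x i ^ 2 := by
    rw [Matrix.neg_mulVec, hSx]
    simp only [dotProduct, Pi.neg_apply]
    apply Finset.sum_congr rfl
    intro i _
    ring
  have hq0 : 0 ≤ x ⬝ᵥ ((-S).mulVec x) := by
    have := hM.dotProduct_mulVec_nonneg x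
    simpa using this
  have hqne : x ⬝ᵥ ((-S).mulVec x) ≠ 0 := by
    intro h
    have hMx : (-S).mulVec x = 0 := by
      have := (hM.dotProduct_mulVec_zero_iff x).mp (by simpa using h)
      exact this
    have hS0 : S.mulVec x = (0 : ℝ) • x := by
      rw [Matrix.neg_mulVec] at hMx
      funext i
      have := congrFun hMx i
      simp only [Pi.neg_apply, Pi.zero_apply, neg_eq_zero] at this
      simp [this]
    exact absurd (hstabS 0 x hxne hS0) (lt_irrefl 0)
  have hqpos : 0 < ∑ i, (δ i - μ) * x i ^ 2 := by
    rw [← hq]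
    exact lt_of_le_of_ne hq0 (Ne.symm hqne)
  -- conclude: some term is positive, hence δ i > μ for some i
  obtain ⟨i, -, hi⟩ : ∃ i ∈ Finset.univ, 0 < (δ i - μ) * x i ^ 2 := by
    by_contra h
    push_neg at h
    have : ∑ i, (δ i - μ) * x i ^ 2 ≤ 0 :=
      Finset.sum_nonpos fun i hi => h i hi
    linarith
  have hδμ : μ < δ i := by
    by_contra h
    push_neg at h
    have hx2 : 0 ≤ x i ^ 2 := sq_nonneg _
    nlinarith
  calc μ < δ i := hδμ
    _ ≤ _ := Finset.le_sup' δ (Finset.mem_univ i)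
end

section
/- Let A be the adjacency matrix of a connected graph, β_i, δ_i > 0, and suppose λ_max(BA − D) < 0. If x̃ ∈ [0,1]^N and B̃ = diag((1−x̃_i)β_i), then every eigenvalue of B̃A − D has negative real part; i.e., the linearized system ẋ = (B̃A − D)x is asymptotically stable. -/
open Matrix

lemma sis_quad_ineq (N : ℕ)
    (A : Matrix (Fin N) (Fin N) ℝ) (hAsymm : A.IsSymm)
    (β δ : Fin N → ℝ) (hβ : ∀ i, 0 < β i) (hδ : ∀ i, 0 < δ i)
    (hstab : ∀ μ : ℝ, (∃ v : Fin N → ℝ, v ≠ 0 ∧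
      (Matrix.diagonal β * A - Matrix.diagonal δ).mulVec v = μ • v) → μ < 0) :
    ∀ w : Fin N → ℝ, w ≠ 0 →
      (∑ i, ∑ j, w i * A i j * w j) < ∑ i, δ i / β i * (w i)^2 := by
  set sβ : Fin N → ℝ := fun i => Real.sqrt (β i) with hsβdef
  have hsβ : ∀ i, 0 < sβ i := fun i => Real.sqrt_pos.mpr (hβ i)
  have hsβsq : ∀ i, sβ i * sβ i = β i := fun i => Real.mul_self_sqrt (hβ i).le
  set S : Matrix (Fin N) (Fin N) ℝ :=
    diagonal sβ * A * diagonal sβ - diagonal δ with hSdef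
  have hSentry : ∀ i j, S i j = sβ i * A i j * sβ j - (if i = j then δ i else 0) := by
    intro i j
    simp [hSdef, Matrix.sub_apply, Matrix.mul_apply, Matrix.diagonal_apply,
      Finset.sum_ite_eq, Finset.sum_ite_eq', mul_comm]
  have hS : S.IsHermitian := by
    rw [Matrix.IsHermitian, conjTranspose_eq_transpose_of_trivial]
    ext i j
    rw [Matrix.transpose_apply, hSentry i j, hSentry j i, hAsymm.apply i j]
    by_cases h : i = j
    · subst h; simp
    · simp [h, Ne.symm h]; ring
  -- the similarity relation
  have hsim : (diagonal β * A - diagonal δ) * diagonal sβ = diagonal sβ * S := by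
    have h1 : diagonal sβ * diagonal sβ = diagonal β := by
      rw [Matrix.diagonal_mul_diagonal]; exact congrArg diagonal (funext hsβsq)
    have h2 : diagonal δ * diagonal sβ = diagonal sβ * diagonal δ := by
      rw [Matrix.diagonal_mul_diagonal, Matrix.diagonal_mul_diagonal]
      exact congrArg diagonal (funext fun i => mul_comm _ _)
    rw [hSdef, Matrix.sub_mul, Matrix.mul_sub, h2, ← h1]
    simp only [Matrix.mul_assoc]
  -- eigenvalues of S are negative
  have heig : ∀ i, hS.eigenvalues i < 0 := by
    intro i
    have hv := hS.mulVec_eigenvectorBasis i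
    set v : Fin N → ℝ := ⇑(hS.eigenvectorBasis i) with hvdef
    have hvne : v ≠ 0 := by
      intro h
      have := hS.eigenvectorBasis.toBasis.ne_zero i
      apply this
      rw [OrthonormalBasis.coe_toBasis]
      ext k
      exact congrFun h k
    obtain ⟨k, hk⟩ := Function.ne_iff.mp hvne
    apply hstab
    refine ⟨diagonal sβ *ᵥ v, ?_, ?_⟩
    · intro h
      apply hk
      have := congrFun h k
      simp only [Matrix.mulVec_diagonal, Pi.zero_apply] at this
      exact (mul_eq_zero.mp this).resolve_left (hsβ k).ne'
    · rw [Matrix.mulVec_mulVec, hsim, ← Matrix.mulVec_mulVec, hv,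
        Matrix.mulVec_smul]
  -- S is negative definite
  have hneg : ∀ u : Fin N → ℝ, u ≠ 0 → u ⬝ᵥ (S *ᵥ u) < 0 := by
    intro u hu
    set U : Matrix (Fin N) (Fin N) ℝ := (hS.eigenvectorUnitary : Matrix (Fin N) (Fin N) ℝ) with hUdef
    set y : Fin N → ℝ := star U *ᵥ u with hydef
    have hUy : U *ᵥ y = u := by
      rw [hydef, Matrix.mulVec_mulVec, (Matrix.mem_unitaryGroup_iff).mp
        (hS.eigenvectorUnitary).2, Matrix.one_mulVec]
    have hyne : y ≠ 0 := fun h => hu (by rw [← hUy, h, Matrix.mulVec_zero])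
    have hform : u ⬝ᵥ (S *ᵥ u) = ∑ i, hS.eigenvalues i * (y i)^2 := by
      conv_lhs => rw [hS.spectral_theorem, Unitary.conjStarAlgAut_apply]
      rw [← Matrix.mulVec_mulVec, ← Matrix.mulVec_mulVec, ← hydef,
        Matrix.dotProduct_mulVec u U, ← Matrix.mulVec_transpose,
        ← conjTranspose_eq_transpose_of_trivial, ← Matrix.star_eq_conjTranspose, ← hydef]
      simp only [dotProduct, Matrix.mulVec_diagonal, Function.comp_apply,
        RCLike.ofReal_real_eq_id, id_eq]
      exact Finset.sum_congr rfl fun i _ => by ring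
    rw [hform]
    obtain ⟨k, hk⟩ := Function.ne_iff.mp hyne
    have : (0:ℝ) = ∑ _i : Fin N, (0:ℝ) := by simp
    rw [this]
    apply Finset.sum_lt_sum
    · intro i _
      exact mul_nonpos_of_nonpos_of_nonneg (heig i).le (sq_nonneg _)
    · exact ⟨k, Finset.mem_univ k, mul_neg_of_neg_of_pos (heig k)
        ((sq_nonneg (y k)).lt_of_ne (Ne.symm (pow_ne_zero 2 hk)))⟩
  -- conclude
  intro w hw
  set u : Fin N → ℝ := fun i => w i / sβ i with hudef
  have hune : u ≠ 0 := by
    obtain ⟨k, hk⟩ := Function.ne_iff.mp hw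
    intro h
    apply hk
    have := congrFun h k
    simp only [hudef, Pi.zero_apply] at this
    exact (div_eq_zero_iff.mp this).resolve_right (hsβ k).ne'
  have h := hneg u hune
  have hexp : u ⬝ᵥ (S *ᵥ u) =
      (∑ i, ∑ j, w i * A i j * w j) - ∑ i, δ i / β i * (w i)^2 := by
    rw [dotProduct]
    simp only [Matrix.mulVec, dotProduct]
    rw [← Finset.sum_sub_distrib]
    apply Finset.sum_congr rfl
    intro i _
    have hterm : ∀ j, u i * (S i j * u j) =
        w i * A i j * w j - (if i = j then δ i / β i * (w i)^2 else 0) := by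
      intro j
      rw [hSentry i j]
      have hinvi : sβ i * (sβ i)⁻¹ = 1 := mul_inv_cancel₀ (hsβ i).ne'
      have hinvj : sβ j * (sβ j)⁻¹ = 1 := mul_inv_cancel₀ (hsβ j).ne'
      by_cases h : i = j
      · subst h
        simp only [↓reduceIte, hudef]
        rw [← hsβsq i]
        field_simp
        linear_combination (w i ^ 2 * A i i * (sβ i * (sβ i)⁻¹ + 1)) * hinvi
      · simp only [if_neg h, hudef]
        field_simp
        linear_combination (w i * A i j * w j * (sβ j * (sβ j)⁻¹)) * hinvi
          + (w i * A i j * w j) * hinvj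
    rw [Finset.mul_sum]
    calc ∑ j, u i * (S i j * u j)
        = ∑ j, (w i * A i j * w j - (if i = j then δ i / β i * (w i)^2 else 0)) :=
          Finset.sum_congr rfl fun j _ => hterm j
      _ = (∑ j, w i * A i j * w j) - ∑ j, (if i = j then δ i / β i * (w i)^2 else 0) :=
          Finset.sum_sub_distrib _ _
      _ = (∑ j, w i * A i j * w j) - δ i / β i * (w i)^2 := by
          rw [Finset.sum_ite_eq]; simp
  rw [hexp] at h
  linarith

/-- if λ_max(BA − D) < 0 and x̃ ∈ [0,1]^N, then B̃A − D (with
B̃ = diag((1−x̃_i)β_i)) is Hurwitz: all its (complex) eigenvalues have negative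
real part. -/
theorem linearized_sis_hurwitz (N : ℕ)
    (A : Matrix (Fin N) (Fin N) ℝ) (hAsymm : A.IsSymm)
    (hA01 : ∀ i j, A i j = 0 ∨ A i j = 1)
    (hconn : (SimpleGraph.fromRel (fun i j : Fin N => A i j = 1)).Connected)
    (β δ : Fin N → ℝ) (hβ : ∀ i, 0 < β i) (hδ : ∀ i, 0 < δ i)
    (hstab : ∀ μ : ℝ, (∃ v : Fin N → ℝ, v ≠ 0 ∧
      (Matrix.diagonal β * A - Matrix.diagonal δ).mulVec v = μ • v) → μ < 0)
    (xt : Fin N → ℝ) (hxt : ∀ i, xt i ∈ Set.Icc (0:ℝ) 1) :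
    ∀ μ ∈ spectrum ℂ
      ((Matrix.diagonal (fun i => (1 - xt i) * β i) * A
          - Matrix.diagonal δ).map (Complex.ofReal)),
      μ.re < 0 := by
  intro μ hμ
  set M : Matrix (Fin N) (Fin N) ℝ :=
    Matrix.diagonal (fun i => (1 - xt i) * β i) * A - Matrix.diagonal δ with hMdef
  have hMent : ∀ i j, M i j = (1 - xt i) * β i * A i j - (if i = j then δ i else 0) := by
    intro i j
    simp [hMdef, Matrix.sub_apply, Matrix.mul_apply, Matrix.diagonal_apply,
      Finset.sum_ite_eq, Finset.sum_ite_eq', mul_comm]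
  -- extract a complex eigenvector
  rw [← AlgEquiv.spectrum_eq (Matrix.toLinAlgEquiv' (R := ℂ) (n := Fin N)),
    ← Module.End.hasEigenvalue_iff_mem_spectrum] at hμ
  obtain ⟨v, hv⟩ := hμ.exists_hasEigenvector
  have hvne : v ≠ 0 := hv.right
  have heq : ∀ i, ∑ j, ((M i j : ℝ) : ℂ) * v j = μ * v i := by
    intro i
    have h := congrFun hv.apply_eq_smul i
    rw [Matrix.toLinAlgEquiv'_apply] at h
    simpa [Matrix.mulVec, dotProduct, Matrix.map_apply, Pi.smul_apply,
      smul_eq_mul] using h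
  set w : Fin N → ℝ := fun i => ‖v i‖ with hwdef
  obtain ⟨k, hk⟩ := Function.ne_iff.mp hvne
  have hwne : w ≠ 0 := by
    intro h
    exact hk (norm_eq_zero.mp (congrFun h k))
  set T : ℝ := ∑ i, Complex.normSq (v i) / β i with hTdef
  have hT : 0 < T := by
    rw [hTdef]
    apply Finset.sum_pos'
    · intro i _
      exact div_nonneg (Complex.normSq_nonneg _) (hβ i).le
    · exact ⟨k, Finset.mem_univ k,
        div_pos (Complex.normSq_pos.mpr hk) (hβ k)⟩
  -- the key identity
  have key : μ.re * T =
      ∑ i, ∑ j, (1 / β i) * (M i j * (((starRingEnd ℂ) (v i)) * v j).re) := by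
    rw [hTdef, Finset.mul_sum]
    refine Finset.sum_congr rfl fun i _ => ?_
    have h1 : ((starRingEnd ℂ) (v i)) * (μ * v i) = μ * (Complex.normSq (v i) : ℂ) := by
      rw [← Complex.mul_conj (v i)]; ring
    have h2 : (((starRingEnd ℂ) (v i)) * (μ * v i)).re = μ.re * Complex.normSq (v i) := by
      rw [h1, Complex.mul_re]
      simp
    have h3 : ((starRingEnd ℂ) (v i)) * (μ * v i) =
        ∑ j, ((starRingEnd ℂ) (v i)) * (((M i j : ℝ) : ℂ) * v j) := by
      rw [← Finset.mul_sum, heq i]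
    have h4 : μ.re * Complex.normSq (v i) =
        ∑ j, M i j * (((starRingEnd ℂ) (v i)) * v j).re := by
      rw [← h2, h3, Complex.re_sum]
      refine Finset.sum_congr rfl fun j _ => ?_
      have : ((starRingEnd ℂ) (v i)) * (((M i j : ℝ) : ℂ) * v j) =
          ((M i j : ℝ) : ℂ) * (((starRingEnd ℂ) (v i)) * v j) := by ring
      rw [this, Complex.re_ofReal_mul]
    have hβi := (hβ i).ne'
    calc μ.re * (Complex.normSq (v i) / β i)
        = (1 / β i) * (μ.re * Complex.normSq (v i)) := by rw [div_eq_mul_inv, one_div]; ring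
      _ = (1 / β i) * (∑ j, M i j * (((starRingEnd ℂ) (v i)) * v j).re) := by rw [h4]
      _ = ∑ j, (1 / β i) * (M i j * (((starRingEnd ℂ) (v i)) * v j).re) := by
          rw [Finset.mul_sum]
  -- termwise bound
  have hterm : ∀ i j, (1 / β i) * (M i j * (((starRingEnd ℂ) (v i)) * v j).re) ≤
      w i * A i j * w j - (if i = j then δ i / β i * (w i)^2 else 0) := by
    intro i j
    set r : ℝ := (((starRingEnd ℂ) (v i)) * v j).re with hrdef
    have hre : |r| ≤ w i * w j := by
      calc |r| ≤ ‖((starRingEnd ℂ) (v i)) * v j‖ := Complex.abs_re_le_norm _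
        _ = w i * w j := by rw [norm_mul, Complex.norm_conj]
    have hA0 : 0 ≤ A i j := by rcases hA01 i j with h | h <;> simp [h]
    have hc0 : 0 ≤ 1 - xt i := by linarith [(hxt i).2]
    have hc1 : 1 - xt i ≤ 1 := by linarith [(hxt i).1]
    have hβi := hβ i
    have h2 : (1 - xt i) * r ≤ w i * w j := by
      calc (1 - xt i) * r ≤ |(1 - xt i) * r| := le_abs_self _
        _ = (1 - xt i) * |r| := by rw [abs_mul, abs_of_nonneg hc0]
        _ ≤ 1 * (w i * w j) :=
            mul_le_mul hc1 hre (abs_nonneg _) zero_le_one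
        _ = w i * w j := one_mul _
    rw [hMent i j]
    by_cases h : i = j
    · subst h
      simp only [eq_self_iff_true, if_true]
      have hrii : r = w i * w i := by
        rw [hrdef, mul_comm, Complex.mul_conj]
        simp [hwdef, Complex.normSq_eq_norm_sq, sq]
      have hexp : (1 / β i) * (((1 - xt i) * β i * A i i - δ i) * r) =
          (1 - xt i) * A i i * r - δ i / β i * r := by
        field_simp
      rw [hexp, hrii]
      have hw2 : δ i / β i * (w i * w i) = δ i / β i * (w i)^2 := by ring
      rw [hw2]
      nlinarith [mul_nonneg (mul_nonneg (sub_nonneg.mpr hc1) hA0)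
        (mul_self_nonneg (w i))]
    · simp only [if_neg h, sub_zero]
      have hexp : (1 / β i) * ((1 - xt i) * β i * A i j * r) =
          A i j * ((1 - xt i) * r) := by
        field_simp
      rw [hexp]
      calc A i j * ((1 - xt i) * r) ≤ A i j * (w i * w j) :=
            mul_le_mul_of_nonneg_left h2 hA0
        _ = w i * A i j * w j := by ring
  -- put it together
  have hsum : ∑ i, ∑ j, (w i * A i j * w j - (if i = j then δ i / β i * (w i)^2 else 0))
      = (∑ i, ∑ j, w i * A i j * w j) - ∑ i, δ i / β i * (w i)^2 := by
    rw [← Finset.sum_sub_distrib]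
    refine Finset.sum_congr rfl fun i _ => ?_
    rw [Finset.sum_sub_distrib, Finset.sum_ite_eq]
    simp
  have hquad := sis_quad_ineq N A hAsymm β δ hβ hδ hstab w hwne
  have hfin : μ.re * T < 0 := by
    calc μ.re * T
        = ∑ i, ∑ j, (1 / β i) * (M i j * (((starRingEnd ℂ) (v i)) * v j).re) := key
      _ ≤ ∑ i, ∑ j, (w i * A i j * w j - (if i = j then δ i / β i * (w i)^2 else 0)) :=
          Finset.sum_le_sum fun i _ => Finset.sum_le_sum fun j _ => hterm i j
      _ = (∑ i, ∑ j, w i * A i j * w j) - ∑ i, δ i / β i * (w i)^2 := hsum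
      _ < 0 := by linarith
  by_contra hcon
  push_neg at hcon
  exact absurd hfin (not_lt.mpr (mul_nonneg hcon hT.le))
end
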